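/- (Quantitative Corollary 2) Suppose the recurrent weights U_r and U_c are orthogonal matrices (U_rᵀU_r = I and U_cᵀU_c = I), so in particular ‖U_r‖₂ = ‖U_c‖₂ = 1. Let h ∈ ℝⁿ with |h_i| ≤ 1 for every i, and let ε ≥ 0 be such that u(h)_i (1 − u(h)_i) ≤ ε and r(h)_i (1 − r(h)_i) ≤ ε for all i. Then the operator 2-norm of the Fréchet derivative of the GRU state-transition map F at h satisfies ‖D F(h)‖₂ ≤ 2 + ε (2‖U_u‖₂ + 1). -/

import Mathlib

open Matrix
noncomputable section

/-- The sigmoid function `σ(t) = 1/(1+exp(-t))`. -/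
def sigmoid (t : ℝ) : ℝ := 1 / (1 + Real.exp (-t))

/-- The operator norm of a square matrix induced by the Euclidean norm. -/
def opNorm2 {n : ℕ} (M : Matrix (Fin n) (Fin n) ℝ) : ℝ :=
  ‖Matrix.toEuclideanCLM (𝕜 := ℝ) M‖

lemma sigmoid_pos (t : ℝ) : 0 < sigmoid t := by unfold sigmoid; positivity

lemma sigmoid_lt_one (t : ℝ) : sigmoid t < 1 := by
  unfold sigmoid
  rw [div_lt_one (by positivity)]
  nlinarith [Real.exp_pos (-t)]

lemma hasDerivAt_sigmoid (t : ℝ) :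
    HasDerivAt sigmoid (sigmoid t * (1 - sigmoid t)) t := by
  have hpos : (0:ℝ) < 1 + Real.exp (-t) := by positivity
  have h1 : HasDerivAt (fun s : ℝ => 1 + Real.exp (-s)) (-Real.exp (-t)) t := by
    simpa using ((Real.hasDerivAt_exp (-t)).comp t (hasDerivAt_neg t)).const_add 1
  have h2 := h1.inv hpos.ne'
  have heq : sigmoid = fun s : ℝ => (1 + Real.exp (-s))⁻¹ := by
    funext s; simp [sigmoid, one_div]
  rw [heq]
  refine h2.congr_deriv ?_
  beta_reduce
  field_simp
  ring

lemma hasDerivAt_tanh (t : ℝ) :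
    HasDerivAt Real.tanh (1 - Real.tanh t ^ 2) t := by
  have hc : Real.cosh t ≠ 0 := (Real.cosh_pos t).ne'
  have h := (Real.hasDerivAt_sinh t).div (Real.hasDerivAt_cosh t) hc
  have heq : (Real.sinh / Real.cosh) = Real.tanh := by
    funext s; rw [Pi.div_apply, Real.tanh_eq_sinh_div_cosh]
  rw [heq] at h
  refine h.congr_deriv ?_
  rw [Real.tanh_eq_sinh_div_cosh]
  have h2 := Real.cosh_sq_sub_sinh_sq t
  field_simp

lemma tanh_sq_le_one (t : ℝ) : Real.tanh t ^ 2 ≤ 1 := by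
  rw [Real.tanh_eq_sinh_div_cosh, div_pow, div_le_one (by positivity)]
  nlinarith [Real.cosh_sq_sub_sinh_sq t]

lemma abs_tanh_le_one (t : ℝ) : |Real.tanh t| ≤ 1 := by
  have := tanh_sq_le_one t
  rw [← abs_one]
  apply abs_le_abs <;>
    nlinarith [abs_nonneg (Real.tanh t), sq_abs (Real.tanh t), le_abs_self (Real.tanh t),
      neg_abs_le (Real.tanh t)]

def diagCLM {n : ℕ} (d : Fin n → ℝ) :
    EuclideanSpace ℝ (Fin n) →L[ℝ] EuclideanSpace ℝ (Fin n) :=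
  LinearMap.toContinuousLinearMap
    { toFun := fun v => WithLp.toLp 2 (fun i => d i * v i)
      map_add' := fun v w => by ext i; simp [mul_add]
      map_smul' := fun a v => by ext i; simp [smul_eq_mul]; ring }

@[simp] lemma diagCLM_apply {n : ℕ} (d : Fin n → ℝ) (v : EuclideanSpace ℝ (Fin n)) (i : Fin n) :
    diagCLM d v i = d i * v i := rfl

lemma diagCLM_norm_le {n : ℕ} {d : Fin n → ℝ} {C : ℝ} (hC : 0 ≤ C) (hd : ∀ i, |d i| ≤ C) :
    ‖diagCLM d‖ ≤ C := by
  refine ContinuousLinearMap.opNorm_le_bound _ hC fun v => ?_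
  rw [EuclideanSpace.norm_eq, EuclideanSpace.norm_eq, ← Real.sqrt_sq hC,
    ← Real.sqrt_mul (sq_nonneg C)]
  apply Real.sqrt_le_sqrt
  rw [Finset.mul_sum]
  apply Finset.sum_le_sum
  intro i _
  have h1 : |d i * v i| ≤ C * |v i| := by
    rw [abs_mul]; exact mul_le_mul_of_nonneg_right (hd i) (abs_nonneg _)
  calc ‖diagCLM d v i‖ ^ 2 = |d i * v i| ^ 2 := by rw [diagCLM_apply, Real.norm_eq_abs]
    _ ≤ (C * |v i|) ^ 2 := by apply pow_le_pow_left₀ (abs_nonneg _) h1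
    _ = C ^ 2 * ‖v i‖ ^ 2 := by rw [mul_pow, Real.norm_eq_abs]

lemma diagCLM_comp {n : ℕ} (a b : Fin n → ℝ) :
    (diagCLM a).comp (diagCLM b) = diagCLM (fun i => a i * b i) := by
  refine ContinuousLinearMap.ext fun v => ?_
  ext i
  simp [mul_assoc]

lemma toECLM_apply {n : ℕ} (A : Matrix (Fin n) (Fin n) ℝ) (v : EuclideanSpace ℝ (Fin n))
    (i : Fin n) : Matrix.toEuclideanCLM (𝕜 := ℝ) A v i = A.mulVec v i := by
  simpa using congrFun (Matrix.ofLp_toEuclideanCLM (𝕜 := ℝ) A v) i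

set_option maxHeartbeats 2000000 in
/-- Quantitative Corollary 2: suppose `U_r` and `U_c` are orthogonal
(`U_rᵀ U_r = I`, `U_cᵀ U_c = I`), so in particular `‖U_r‖₂ = ‖U_c‖₂ = 1`. If `|h_i| ≤ 1` for
all `i`, `ε ≥ 0`, and `u(h)_i (1 - u(h)_i) ≤ ε` and `r(h)_i (1 - r(h)_i) ≤ ε` for all `i`,
then the Fréchet derivative of the GRU state-transition map `F` at `h` satisfies
`‖D F(h)‖₂ ≤ 2 + ε (2‖U_u‖₂ + 1)`. -/
theorem ncgru_transition_deriv_norm_bound {n m : ℕ} (x : Fin m → ℝ)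
    (Wr Wu Wc : Matrix (Fin n) (Fin m) ℝ) (Ur Uu Uc : Matrix (Fin n) (Fin n) ℝ)
    (br bu bc : EuclideanSpace ℝ (Fin n)) (h : EuclideanSpace ℝ (Fin n))
    (hUr : Urᵀ * Ur = 1) (hUc : Ucᵀ * Uc = 1)
    (hUrnorm : opNorm2 Ur = 1) (hUcnorm : opNorm2 Uc = 1)
    (hh : ∀ i, |h i| ≤ 1) (ε : ℝ) (hε : 0 ≤ ε) :
    let r : EuclideanSpace ℝ (Fin n) → EuclideanSpace ℝ (Fin n) :=
      fun h => WithLp.toLp 2 (fun i => sigmoid (Wr.mulVec x i + Ur.mulVec h i + br i))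
    let u : EuclideanSpace ℝ (Fin n) → EuclideanSpace ℝ (Fin n) :=
      fun h => WithLp.toLp 2 (fun i => sigmoid (Wu.mulVec x i + Uu.mulVec h i + bu i))
    let c : EuclideanSpace ℝ (Fin n) → EuclideanSpace ℝ (Fin n) :=
      fun h => WithLp.toLp 2 (fun i => Real.tanh (Wc.mulVec x i + Uc.mulVec (fun j => r h j * h j) i + bc i))
    let F : EuclideanSpace ℝ (Fin n) → EuclideanSpace ℝ (Fin n) :=
      fun h => WithLp.toLp 2 (fun i => (1 - u h i) * h i + u h i * c h i)
    (∀ i, u h i * (1 - u h i) ≤ ε) →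
    (∀ i, r h i * (1 - r h i) ≤ ε) →
    ‖fderiv ℝ F h‖ ≤ 2 + ε * (2 * opNorm2 Uu + 1) := by
  intro r u c F huq hrq
  set φ : EuclideanSpace ℝ (Fin n) ≃L[ℝ] (Fin n → ℝ) :=
    PiLp.continuousLinearEquiv 2 ℝ (fun _ : Fin n => ℝ) with hφdef
  set P : Fin n → (EuclideanSpace ℝ (Fin n) →L[ℝ] ℝ) :=
    fun i => (ContinuousLinearMap.proj i).comp
      (φ : EuclideanSpace ℝ (Fin n) →L[ℝ] (Fin n → ℝ)) with hPdef
  have hP : ∀ (i : Fin n) (v : EuclideanSpace ℝ (Fin n)), P i v = v i := fun _ _ => rfl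
  set CU : Matrix (Fin n) (Fin n) ℝ → Fin n → (EuclideanSpace ℝ (Fin n) →L[ℝ] ℝ) :=
    fun A i => (P i).comp (Matrix.toEuclideanCLM (𝕜 := ℝ) A) with hCUdef
  have hCU : ∀ A (i : Fin n) (v : EuclideanSpace ℝ (Fin n)), CU A i v = A.mulVec v i :=
    fun A i v => toECLM_apply A v i
  -- values at the point h
  set rv : Fin n → ℝ := fun i => r h i with hrvdef
  set uv : Fin n → ℝ := fun i => u h i with huvdef
  set cv : Fin n → ℝ := fun i => c h i with hcvdef
  set dr : Fin n → ℝ := fun i => rv i * (1 - rv i) with hdrdef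
  set du : Fin n → ℝ := fun i => uv i * (1 - uv i) with hdudef
  set dc : Fin n → ℝ := fun i => 1 - cv i ^ 2 with hdcdef
  -- derivative candidates
  set Lr := Matrix.toEuclideanCLM (𝕜 := ℝ) Ur with hLr
  set Lu := Matrix.toEuclideanCLM (𝕜 := ℝ) Uu with hLu
  set Lc := Matrix.toEuclideanCLM (𝕜 := ℝ) Uc with hLc
  set Dg : EuclideanSpace ℝ (Fin n) →L[ℝ] EuclideanSpace ℝ (Fin n) :=
    diagCLM rv + (diagCLM (fun i => h i)).comp ((diagCLM dr).comp Lr) with hDg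
  set D : EuclideanSpace ℝ (Fin n) →L[ℝ] EuclideanSpace ℝ (Fin n) :=
    diagCLM (fun i => 1 - uv i)
      + (diagCLM (fun i => cv i - h i)).comp ((diagCLM du).comp Lu)
      + (diagCLM uv).comp ((diagCLM dc).comp (Lc.comp Dg)) with hD
  -- coordinate derivatives of r and u
  have hlinUr : ∀ i, HasFDerivAt (fun h' : EuclideanSpace ℝ (Fin n) => Ur.mulVec h' i)
      (CU Ur i) h := by
    intro i
    have heq : (fun h' : EuclideanSpace ℝ (Fin n) => Ur.mulVec h' i) = ⇑(CU Ur i) :=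
      funext fun v => (hCU Ur i v).symm
    rw [heq]; exact (CU Ur i).hasFDerivAt
  have hlinUu : ∀ i, HasFDerivAt (fun h' : EuclideanSpace ℝ (Fin n) => Uu.mulVec h' i)
      (CU Uu i) h := by
    intro i
    have heq : (fun h' : EuclideanSpace ℝ (Fin n) => Uu.mulVec h' i) = ⇑(CU Uu i) :=
      funext fun v => (hCU Uu i v).symm
    rw [heq]; exact (CU Uu i).hasFDerivAt
  have hru : ∀ i, HasFDerivAt (fun h' : EuclideanSpace ℝ (Fin n) => r h' i)
      (dr i • CU Ur i) h := by
    intro i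
    have haff := ((hlinUr i).const_add (Wr.mulVec x i)).add_const (br i)
    have := (hasDerivAt_sigmoid _).comp_hasFDerivAt h haff
    exact this
  have huu : ∀ i, HasFDerivAt (fun h' : EuclideanSpace ℝ (Fin n) => u h' i)
      (du i • CU Uu i) h := by
    intro i
    have haff := ((hlinUu i).const_add (Wu.mulVec x i)).add_const (bu i)
    have := (hasDerivAt_sigmoid _).comp_hasFDerivAt h haff
    exact this
  have hPd : ∀ i, HasFDerivAt (fun v : EuclideanSpace ℝ (Fin n) => v i) (P i) h :=
    fun i => (P i).hasFDerivAt
  -- derivative of the gate product g(h) = r(h) ⊙ h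
  have hg : HasFDerivAt
      (fun h' : EuclideanSpace ℝ (Fin n) =>
        (WithLp.equiv 2 (Fin n → ℝ)).symm (fun j => r h' j * h' j)) Dg h := by
    apply (ContinuousLinearEquiv.comp_hasFDerivAt_iff φ).1
    refine hasFDerivAt_pi'.2 fun j => ?_
    have h2 := (hru j).mul (hPd j)
    refine h2.congr_fderiv ?_
    refine ContinuousLinearMap.ext fun v => ?_
    simp only [ContinuousLinearMap.coe_comp', Function.comp_apply,
      ContinuousLinearMap.proj_apply, ContinuousLinearEquiv.coe_coe,
      ContinuousLinearMap.add_apply, ContinuousLinearMap.smul_apply, smul_eq_mul, hP]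
    rw [hDg]
    simp only [hLr, ContinuousLinearMap.add_apply, ContinuousLinearMap.coe_comp',
      Function.comp_apply, diagCLM_apply, hφdef, PiLp.continuousLinearEquiv_apply,
      WithLp.equiv_symm_apply, PiLp.toLp_apply, PiLp.add_apply, toECLM_apply, hCU, hP]
    rfl
  -- coordinate derivatives of c
  have hcc : ∀ i, HasFDerivAt (fun h' : EuclideanSpace ℝ (Fin n) => c h' i)
      (dc i • ((CU Uc i).comp Dg)) h := by
    intro i
    have hin : HasFDerivAt
        (fun h' : EuclideanSpace ℝ (Fin n) => Uc.mulVec (fun j => r h' j * h' j) i)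
        ((CU Uc i).comp Dg) h := by
      have heq : (fun h' : EuclideanSpace ℝ (Fin n) => Uc.mulVec (fun j => r h' j * h' j) i)
          = ⇑(CU Uc i) ∘ (fun h' : EuclideanSpace ℝ (Fin n) =>
              (WithLp.equiv 2 (Fin n → ℝ)).symm (fun j => r h' j * h' j)) :=
        funext fun v => (hCU Uc i (WithLp.toLp 2 (fun j => r v j * v j))).symm
      rw [heq]
      exact (CU Uc i).hasFDerivAt.comp h hg
    have haff := (hin.const_add (Wc.mulVec x i)).add_const (bc i)
    have := (hasDerivAt_tanh _).comp_hasFDerivAt h haff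
    exact this
  -- derivative of F
  have hF : HasFDerivAt F D h := by
    apply (ContinuousLinearEquiv.comp_hasFDerivAt_iff φ).1
    refine hasFDerivAt_pi'.2 fun i => ?_
    have h1 := ((huu i).const_sub 1).mul (hPd i)
    have h2 := (huu i).mul (hcc i)
    have h3 := h1.add h2
    refine h3.congr_fderiv ?_
    refine ContinuousLinearMap.ext fun v => ?_
    simp only [ContinuousLinearMap.coe_comp', Function.comp_apply,
      ContinuousLinearMap.proj_apply, ContinuousLinearEquiv.coe_coe,
      ContinuousLinearMap.add_apply, ContinuousLinearMap.smul_apply, smul_eq_mul,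
      ContinuousLinearMap.neg_apply, hP]
    rw [hD]
    simp only [hLu, hLc, ContinuousLinearMap.add_apply, ContinuousLinearMap.coe_comp',
      Function.comp_apply, diagCLM_apply, hφdef, PiLp.continuousLinearEquiv_apply,
      WithLp.equiv_symm_apply, PiLp.toLp_apply, PiLp.add_apply, toECLM_apply, hCU, hP]
    ring
  rw [hF.fderiv]
  -- pointwise bounds
  have hrv0 : ∀ i, 0 < rv i := fun i => sigmoid_pos _
  have hrv1 : ∀ i, rv i < 1 := fun i => sigmoid_lt_one _
  have huv0 : ∀ i, 0 < uv i := fun i => sigmoid_pos _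
  have huv1 : ∀ i, uv i < 1 := fun i => sigmoid_lt_one _
  have hcv : ∀ i, |cv i| ≤ 1 := fun i => abs_tanh_le_one _
  have hcsq : ∀ i, cv i ^ 2 ≤ 1 := fun i => tanh_sq_le_one _
  have hdu0 : ∀ i, 0 ≤ du i := fun i =>
    mul_nonneg (huv0 i).le (by have := huv1 i; linarith)
  have hdr0 : ∀ i, 0 ≤ dr i := fun i =>
    mul_nonneg (hrv0 i).le (by have := hrv1 i; linarith)
  have hduε : ∀ i, du i ≤ ε := fun i => huq i
  have hdrε : ∀ i, dr i ≤ ε := fun i => hrq i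
  -- rewrite the compositions of diagonal maps
  have hBrw : (diagCLM (fun i => cv i - h i)).comp ((diagCLM du).comp Lu)
      = (diagCLM (fun i => (cv i - h i) * du i)).comp Lu := by
    rw [← ContinuousLinearMap.comp_assoc, diagCLM_comp]
  have hCrw : (diagCLM uv).comp ((diagCLM dc).comp (Lc.comp Dg))
      = (diagCLM (fun i => uv i * dc i)).comp (Lc.comp Dg) := by
    rw [← ContinuousLinearMap.comp_assoc, diagCLM_comp]
  have hDgrw : (diagCLM (fun i => h i)).comp ((diagCLM dr).comp Lr)
      = (diagCLM (fun i => h i * dr i)).comp Lr := by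
    rw [← ContinuousLinearMap.comp_assoc, diagCLM_comp]
  have hLrn : ‖Lr‖ = 1 := hUrnorm
  have hLcn : ‖Lc‖ = 1 := hUcnorm
  have hLun : ‖Lu‖ = opNorm2 Uu := rfl
  -- norm bounds for the three pieces
  have hA : ‖diagCLM (fun i => 1 - uv i)‖ ≤ 1 := by
    refine diagCLM_norm_le zero_le_one fun i => ?_
    have a := huv0 i; have b := huv1 i
    rw [abs_le]; constructor <;> linarith
  have hBdiag : ‖diagCLM (fun i => (cv i - h i) * du i)‖ ≤ 2 * ε := by
    refine diagCLM_norm_le (by positivity) fun i => ?_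
    rw [abs_mul, abs_of_nonneg (hdu0 i)]
    have h2' : |cv i - h i| ≤ 2 := by
      have a := abs_le.1 (hcv i); have b := abs_le.1 (hh i)
      rw [abs_le]; constructor <;> [linarith; linarith]
    have h3' : |cv i - h i| * du i ≤ 2 * ε := mul_le_mul h2' (hduε i) (hdu0 i) (by norm_num)
    exact h3'
  have hB : ‖(diagCLM (fun i => (cv i - h i) * du i)).comp Lu‖ ≤ 2 * ε * opNorm2 Uu := by
    calc ‖(diagCLM (fun i => (cv i - h i) * du i)).comp Lu‖
        ≤ ‖diagCLM (fun i => (cv i - h i) * du i)‖ * ‖Lu‖ :=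
          ContinuousLinearMap.opNorm_comp_le _ _
      _ ≤ 2 * ε * ‖Lu‖ := mul_le_mul_of_nonneg_right hBdiag (norm_nonneg _)
      _ = 2 * ε * opNorm2 Uu := by rw [hLun]
  have hDgn : ‖Dg‖ ≤ 1 + ε := by
    rw [hDg, hDgrw]
    calc ‖diagCLM rv + (diagCLM (fun i => h i * dr i)).comp Lr‖
        ≤ ‖diagCLM rv‖ + ‖(diagCLM (fun i => h i * dr i)).comp Lr‖ := norm_add_le _ _
      _ ≤ 1 + ε := by
          have e1 : ‖diagCLM rv‖ ≤ 1 := by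
            refine diagCLM_norm_le zero_le_one fun i => ?_
            have a := hrv0 i; have b := hrv1 i
            rw [abs_le]; constructor <;> linarith
          have e2 : ‖(diagCLM (fun i => h i * dr i)).comp Lr‖ ≤ ε := by
            calc ‖(diagCLM (fun i => h i * dr i)).comp Lr‖
                ≤ ‖diagCLM (fun i => h i * dr i)‖ * ‖Lr‖ :=
                  ContinuousLinearMap.opNorm_comp_le _ _
              _ ≤ ε * 1 := by
                  refine mul_le_mul ?_ (le_of_eq hLrn) (norm_nonneg _) hε
                  refine diagCLM_norm_le hε fun i => ?_
                  rw [abs_mul, abs_of_nonneg (hdr0 i)]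
                  have h4' : |h i| * dr i ≤ 1 * ε := mul_le_mul (hh i) (hdrε i) (hdr0 i) zero_le_one
                  linarith
              _ = ε := mul_one ε
          linarith
  have hC : ‖(diagCLM (fun i => uv i * dc i)).comp (Lc.comp Dg)‖ ≤ 1 + ε := by
    calc ‖(diagCLM (fun i => uv i * dc i)).comp (Lc.comp Dg)‖
        ≤ ‖diagCLM (fun i => uv i * dc i)‖ * ‖Lc.comp Dg‖ :=
          ContinuousLinearMap.opNorm_comp_le _ _
      _ ≤ 1 * (1 * (1 + ε)) := by
          refine mul_le_mul ?_ ?_ (norm_nonneg _) zero_le_one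
          · refine diagCLM_norm_le zero_le_one fun i => ?_
            have a := huv0 i; have b := huv1 i
            have c1 : 0 ≤ dc i := by have := hcsq i; simp only [hdcdef]; linarith
            have c2 : dc i ≤ 1 := by
              have : 0 ≤ cv i ^ 2 := sq_nonneg _
              simp only [hdcdef]; linarith
            rw [abs_mul, abs_of_pos a, abs_of_nonneg c1]
            have h5' : uv i * dc i ≤ 1 * 1 := mul_le_mul b.le c2 c1 zero_le_one
            linarith
          · calc ‖Lc.comp Dg‖ ≤ ‖Lc‖ * ‖Dg‖ := ContinuousLinearMap.opNorm_comp_le _ _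
              _ ≤ 1 * (1 + ε) := by
                  rw [hLcn]
                  exact mul_le_mul_of_nonneg_left hDgn zero_le_one
      _ = 1 + ε := by ring
  have k1 : ‖diagCLM (fun i => 1 - uv i) + (diagCLM (fun i => (cv i - h i) * du i)).comp Lu + (diagCLM (fun i => uv i * dc i)).comp (Lc.comp Dg)‖ ≤ ‖diagCLM (fun i => 1 - uv i)‖ + ‖(diagCLM (fun i => (cv i - h i) * du i)).comp Lu‖ + ‖(diagCLM (fun i => uv i * dc i)).comp (Lc.comp Dg)‖ :=
    (norm_add_le _ _).trans (add_le_add_left (norm_add_le _ _) _)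
  rw [hD, hBrw, hCrw]
  nlinarith [k1, hA, hB, hC]
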